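/- Let V be a finite-dimensional real vector space and W a finite-dimensional linear subspace of the space of symmetric bilinear forms on V. If (v₀,v₁,…,vₙ) ∈ V^{n+1} is W-independent, then the linear map V → (W*)^{n+1} sending v to the tuple of functionals (w ↦ w(v,v₀), w ↦ w(v,v₁), …, w ↦ w(v,vₙ)) is surjective. -/

import Mathlib

open Module

/-- `φ(span(vs) ⊗ W)`: the subspace of `V* = V →ₗ[ℝ] ℝ` spanned by the functionals
`w(v, −)` for `w ∈ W` and `v ∈ span(s)`. -/
noncomputable def phiSpan {V : Type*} [AddCommGroup V] [Module ℝ V]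
    (W : Submodule ℝ (V →ₗ[ℝ] V →ₗ[ℝ] ℝ)) (s : Set V) : Submodule ℝ (V →ₗ[ℝ] ℝ) :=
  Submodule.span ℝ {f | ∃ w ∈ W, ∃ v ∈ Submodule.span ℝ s, f = w v}

/-- A tuple `(v₁, …, vₙ)` is `W`-independent if `φ(span(v₁,…,vₙ) ⊗ W) ⊆ V*` has
dimension `n · dim W`. -/
def WIndep {V : Type*} [AddCommGroup V] [Module ℝ V]
    (W : Submodule ℝ (V →ₗ[ℝ] V →ₗ[ℝ] ℝ)) {n : ℕ} (vs : Fin n → V) : Prop :=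
  finrank ℝ (phiSpan W (Set.range vs)) = n * finrank ℝ W

set_option maxHeartbeats 1000000 in
set_option synthInstance.maxHeartbeats 400000 in
theorem dual_evaluation_surjective_of_WIndep
    {V : Type*} [AddCommGroup V] [Module ℝ V] [FiniteDimensional ℝ V]
    (W : Submodule ℝ (V →ₗ[ℝ] V →ₗ[ℝ] ℝ))
    (hsymm : ∀ w ∈ W, ∀ u v : V, w u v = w v u)
    (n : ℕ) (vs : Fin (n + 1) → V) (hvs : WIndep W vs) :
    Function.Surjective (fun v : V => fun j : Fin (n + 1) =>
      ((LinearMap.applyₗ (vs j)) ∘ₗ (LinearMap.applyₗ v) ∘ₗ W.subtype :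
        Module.Dual ℝ W)) := by
  classical
  haveI : Module.Free ℝ W := by
    letI : AddCommGroup W := Module.addCommMonoidToAddCommGroup ℝ
    exact Module.Free.of_divisionRing ℝ W
  set d := finrank ℝ W with hd
  set b : Basis (Fin d) ℝ W := finBasis ℝ W with hb
  -- the coefficient map L : (Fin (n+1) × Fin d → ℝ) → Dual V
  set L : ((Fin (n + 1) × Fin d) → ℝ) →ₗ[ℝ] (V →ₗ[ℝ] ℝ) :=
    { toFun := fun c => ∑ i : Fin (n + 1) × Fin d,
        c i • ((b i.2 : V →ₗ[ℝ] V →ₗ[ℝ] ℝ) (vs i.1))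
      map_add' := by intros; simp [add_smul, Finset.sum_add_distrib]
      map_smul' := by intros; simp [Finset.smul_sum, smul_smul]
    } with hL
  have hLapp : ∀ c, L c = ∑ i : Fin (n + 1) × Fin d,
      c i • ((b i.2 : V →ₗ[ℝ] V →ₗ[ℝ] ℝ) (vs i.1)) := fun _ => rfl
  -- range L = phiSpan
  have hrange : LinearMap.range L = phiSpan W (Set.range vs) := by
    apply le_antisymm
    · rintro _ ⟨c, rfl⟩
      rw [hLapp]
      apply Submodule.sum_mem
      intro i _
      apply Submodule.smul_mem
      apply Submodule.subset_span
      exact ⟨(b i.2 : V →ₗ[ℝ] V →ₗ[ℝ] ℝ), (b i.2).2, vs i.1,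
        Submodule.subset_span ⟨i.1, rfl⟩, rfl⟩
    · rw [phiSpan, Submodule.span_le]
      rintro _ ⟨w, hw, v, hv, rfl⟩
      induction hv using Submodule.span_induction with
      | mem x hx =>
          obtain ⟨j, rfl⟩ := hx
          refine ⟨fun i => if i.1 = j then b.repr ⟨w, hw⟩ i.2 else 0, ?_⟩
          rw [hLapp]
          have hw' : ((⟨w, hw⟩ : W) : V →ₗ[ℝ] V →ₗ[ℝ] ℝ) =
              ∑ k : Fin d, b.repr ⟨w, hw⟩ k • ((b k : V →ₗ[ℝ] V →ₗ[ℝ] ℝ)) := by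
            conv_lhs => rw [← b.sum_repr ⟨w, hw⟩]
            push_cast [Submodule.coe_sum]
            rfl
          calc ∑ i : Fin (n + 1) × Fin d,
                (if i.1 = j then b.repr ⟨w, hw⟩ i.2 else 0) •
                  ((b i.2 : V →ₗ[ℝ] V →ₗ[ℝ] ℝ) (vs i.1))
              = ∑ j' : Fin (n + 1), ∑ k : Fin d,
                (if j' = j then b.repr ⟨w, hw⟩ k else 0) •
                  ((b k : V →ₗ[ℝ] V →ₗ[ℝ] ℝ) (vs j')) := by
                rw [Fintype.sum_prod_type]
            _ = ∑ k : Fin d, b.repr ⟨w, hw⟩ k • ((b k : V →ₗ[ℝ] V →ₗ[ℝ] ℝ) (vs j)) := by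
                rw [Finset.sum_comm]
                refine Finset.sum_congr rfl fun k _ => ?_
                simp [Finset.sum_ite_eq']
            _ = w (vs j) := by
                have h3 : w (vs j) = (∑ k : Fin d,
                    b.repr ⟨w, hw⟩ k • ((b k : V →ₗ[ℝ] V →ₗ[ℝ] ℝ))) (vs j) := by
                  rw [← hw']
                rw [h3]
                simp
      | zero => simp only [map_zero]; exact (LinearMap.range L).zero_mem
      | add x y hx hy ihx ihy =>
          simp only [map_add]; exact (LinearMap.range L).add_mem ihx ihy
      | smul c x hx ihx =>
          simp only [map_smul]; exact (LinearMap.range L).smul_mem c ihx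
  -- L is injective
  have hinj : Function.Injective L := by
    have h1 := LinearMap.finrank_range_add_finrank_ker L
    rw [hrange, hvs, ← hd] at h1
    have h2 : finrank ℝ ((Fin (n + 1) × Fin d) → ℝ) = (n + 1) * d := by
      simp [Module.finrank_pi]
    rw [← h2] at h1
    have h0 : finrank ℝ (LinearMap.ker L) = 0 := by omega
    exact LinearMap.ker_eq_bot.mp (Submodule.finrank_eq_zero.mp h0)
  -- the evaluation map Φ : V → (ι → ℝ)
  set Φ : V →ₗ[ℝ] ((Fin (n + 1) × Fin d) → ℝ) :=
    { toFun := fun v i => (b i.2 : V →ₗ[ℝ] V →ₗ[ℝ] ℝ) (vs i.1) v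
      map_add' := by intro x y; funext i; simp
      map_smul' := by intro c x; funext i; simp } with hΦ
  have hΦapp : ∀ v i, Φ v i = (b i.2 : V →ₗ[ℝ] V →ₗ[ℝ] ℝ) (vs i.1) v := fun _ _ => rfl
  -- Φ is surjective via injectivity of its dual map
  have hΦsurj : Function.Surjective Φ := by
    rw [← LinearMap.dualMap_injective_iff]
    rw [← LinearMap.ker_eq_bot, LinearMap.ker_eq_bot']
    intro ξ hξ
    set c : (Fin (n + 1) × Fin d) → ℝ := fun i => ξ (Pi.single i 1) with hc
    have hsingle : ∀ (g : (Fin (n + 1) × Fin d) → ℝ) i,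
        Pi.single i (g i) = g i • (Pi.single i 1 : (Fin (n + 1) × Fin d) → ℝ) := by
      intro g i; funext x
      by_cases h : x = i <;> simp [Pi.single_apply, h]
    have hξg : ∀ g : (Fin (n + 1) × Fin d) → ℝ, ξ g = ∑ i, g i * c i := by
      intro g
      conv_lhs => rw [← Finset.univ_sum_single g, map_sum]
      refine Finset.sum_congr rfl fun i _ => ?_
      rw [hsingle g i, map_smul, smul_eq_mul, hc]
    have hLc : L c = 0 := by
      apply LinearMap.ext
      intro v
      have h1 : Φ.dualMap ξ v = 0 := by rw [hξ]; rfl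
      have h2 : Φ.dualMap ξ v = ξ (Φ v) := rfl
      rw [h2, hξg] at h1
      rw [hLapp]
      simp only [LinearMap.zero_apply, LinearMap.coe_sum, Finset.sum_apply,
        LinearMap.smul_apply, smul_eq_mul]
      rw [← h1]
      refine Finset.sum_congr rfl fun i _ => ?_
      rw [hΦapp, mul_comm]
    have hc0 : c = 0 := hinj (by rw [hLc, map_zero])
    apply LinearMap.ext
    intro g
    rw [hξg, hc0]
    simp
  -- conclude
  intro g
  obtain ⟨v, hv⟩ := hΦsurj (fun i => g i.1 (b i.2))
  refine ⟨v, ?_⟩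
  funext j
  apply b.ext
  intro k
  have h1 : Φ v (j, k) = g j (b k) := congrFun hv (j, k)
  rw [hΦapp] at h1
  show (b k : V →ₗ[ℝ] V →ₗ[ℝ] ℝ) v (vs j) = g j (b k)
  rw [hsymm _ (b k).2 v (vs j), h1]
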